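/- Let 𝓕 ⊆ {0,1}ⁿ be nonempty and suppose A ∈ ℝ^{p×n}, B ∈ ℝ^{p×q} and b ∈ ℝ^p give an extended formulation of conv(𝓕), i.e. conv(𝓕) = {x ∈ ℝⁿ : ∃ z ∈ ℝ^q with A x + B z ≤ b}. Then conv(Π(𝓕)) = {(y₀,y) ∈ ℝ×ℝⁿ : ∃ z ∈ ℝ^q with A y + B z ≤ b·y₀, u₀y₀ + Σ_{j∈N} u_j y_j = 1, and y₀ ≥ 0}. -/

import Mathlib

/-- Extended formulation for `conv(Π(𝓕))` obtained from an extended formulation of `conv(𝓕)`. -/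
theorem stmt3 (n p q : ℕ) (hn : 1 ≤ n) (u0 : ℝ) (hu0 : 0 < u0)
    (u : Fin n → ℝ) (hu : ∀ j, 0 ≤ u j)
    (F : Set (Fin n → ℝ)) (hFne : F.Nonempty)
    (hF : ∀ x ∈ F, ∀ j, x j = 0 ∨ x j = 1)
    (A : Matrix (Fin p) (Fin n) ℝ) (B : Matrix (Fin p) (Fin q) ℝ) (b : Fin p → ℝ)
    (hconv : convexHull ℝ F =
      {x : Fin n → ℝ | ∃ z : Fin q → ℝ, ∀ i, A.mulVec x i + B.mulVec z i ≤ b i}) :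
    convexHull ℝ {pt : ℝ × (Fin n → ℝ) |
        u0 * pt.1 + ∑ j, u j * pt.2 j = 1 ∧ (∃ x ∈ F, pt.2 = pt.1 • x) ∧ 0 < pt.1} =
      {pt : ℝ × (Fin n → ℝ) |
        (∃ z : Fin q → ℝ, ∀ i, A.mulVec pt.2 i + B.mulVec z i ≤ b i * pt.1) ∧
        u0 * pt.1 + ∑ j, u j * pt.2 j = 1 ∧ 0 ≤ pt.1} := by
  apply le_antisymm
  · -- conv(Π) ⊆ Q
    apply convexHull_min
    · rintro ⟨t, y⟩ ⟨hsum, ⟨x, hxF, hy⟩, ht⟩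
      have hx : x ∈ convexHull ℝ F := subset_convexHull ℝ F hxF
      rw [hconv] at hx
      obtain ⟨z, hz⟩ := hx
      refine ⟨⟨t • z, fun i => ?_⟩, hsum, ht.le⟩
      have h := mul_le_mul_of_nonneg_left (hz i) ht.le
      simp only at hy
      rw [hy]
      simp only [Matrix.mulVec_smul, Pi.smul_apply, smul_eq_mul]
      rw [mul_add] at h
      linarith
    · rintro ⟨t1, y1⟩ ⟨⟨z1, hz1⟩, he1, ht1⟩ ⟨t2, y2⟩ ⟨⟨z2, hz2⟩, he2, ht2⟩ a c ha hc hac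
      refine ⟨⟨a • z1 + c • z2, fun i => ?_⟩, ?_, ?_⟩
      · simp only [Prod.smul_mk, Prod.mk_add_mk, Matrix.mulVec_add, Matrix.mulVec_smul,
          Pi.add_apply, Pi.smul_apply, smul_eq_mul]
        have h1 := mul_le_mul_of_nonneg_left (hz1 i) ha
        have h2 := mul_le_mul_of_nonneg_left (hz2 i) hc
        nlinarith
      · simp only [Prod.smul_mk, Prod.mk_add_mk, Pi.add_apply, Pi.smul_apply, smul_eq_mul,
          Set.mem_setOf_eq]
        have hs : ∑ j, u j * (a * y1 j + c * y2 j)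
            = a * ∑ j, u j * y1 j + c * ∑ j, u j * y2 j := by
          rw [Finset.mul_sum, Finset.mul_sum, ← Finset.sum_add_distrib]
          exact Finset.sum_congr rfl fun j _ => by ring
        rw [hs]
        simp only [Set.mem_setOf_eq] at he1 he2
        nlinarith
      · simp only [Prod.smul_mk, Prod.mk_add_mk]
        positivity
  · -- Q ⊆ conv(Π)
    rintro ⟨t, y⟩ ⟨⟨z, hz⟩, hsum, ht0⟩
    simp only [Set.mem_setOf_eq] at hz hsum
    rcases eq_or_lt_of_le ht0 with h0 | htpos
    · -- t = 0 : impossible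
      exfalso
      obtain ⟨x0, hx0⟩ := hFne
      have hx0c : x0 ∈ convexHull ℝ F := subset_convexHull ℝ F hx0
      rw [hconv] at hx0c
      obtain ⟨z0, hz0⟩ := hx0c
      have h0' : (0:ℝ) = t := h0
      have hcube : convexHull ℝ F ⊆ Set.univ.pi (fun _ : Fin n => Set.Icc (0:ℝ) 1) := by
        apply convexHull_min
        · intro x hx j _
          rcases hF x hx j with h | h <;> simp [h]
        · exact convex_pi fun i _ => convex_Icc 0 1
      have key : ∀ s : ℝ, 0 ≤ s → (x0 + s • y) ∈ convexHull ℝ F := by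
        intro s hs
        rw [hconv]
        refine ⟨z0 + s • z, fun i => ?_⟩
        have h1 := hz0 i
        have h2 := hz i
        rw [← h0', mul_zero] at h2
        have h3 := mul_le_mul_of_nonneg_left h2 hs
        simp only [Matrix.mulVec_add, Matrix.mulVec_smul, Pi.add_apply, Pi.smul_apply,
          smul_eq_mul]
        rw [mul_add] at h3
        linarith
      have hyj : ∀ j, y j = 0 := by
        intro j
        by_contra hne
        have hbd : ∀ s : ℝ, 0 ≤ s → 0 ≤ x0 j + s * y j ∧ x0 j + s * y j ≤ 1 := by
          intro s hs
          have hm := hcube (key s hs) j (Set.mem_univ j)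
          simpa using hm
        have h00 := hbd 0 le_rfl
        rcases lt_or_gt_of_ne hne with hneg | hpos
        · have hsp : (0:ℝ) < 2 / (-y j) := div_pos two_pos (neg_pos.2 hneg)
          have := (hbd (2 / (-y j)) hsp.le).1
          have hne0 : -y j ≠ 0 := neg_ne_zero.2 hne
          have he : 2 / (-y j) * y j = -2 := by field_simp
          rw [he] at this
          linarith [h00.2]
        · have hsp : (0:ℝ) < 2 / y j := by positivity
          have := (hbd (2 / y j) hsp.le).2
          have he : 2 / y j * y j = 2 := by field_simp
          rw [he] at this
          linarith [h00.1]
      rw [← h0', mul_zero] at hsum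
      have : ∑ j, u j * y j = 0 := by
        apply Finset.sum_eq_zero; intro j _; rw [hyj j]; ring
      rw [this] at hsum
      linarith
    · -- t > 0
      have htne : t ≠ 0 := ne_of_gt htpos
      set x : Fin n → ℝ := t⁻¹ • y with hxdef
      have hxconv : x ∈ convexHull ℝ F := by
        rw [hconv]
        refine ⟨t⁻¹ • z, fun i => ?_⟩
        have h := mul_le_mul_of_nonneg_left (hz i) (inv_nonneg.2 htpos.le)
        have hbt : t⁻¹ * (b i * t) = b i := by field_simp
        rw [mul_add, hbt] at h
        simpa only [hxdef, Matrix.mulVec_smul, Pi.smul_apply, smul_eq_mul] using h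
      have hyx : ∀ j, y j = t * x j := by
        intro j
        simp only [hxdef, Pi.smul_apply, smul_eq_mul]
        field_simp
      rw [convexHull_eq] at hxconv
      obtain ⟨ι, s, w, zf, hw0, hw1, hzfF, hcm⟩ := hxconv
      have hxeq : ∑ i ∈ s, w i • zf i = x := by
        rw [← Finset.centerMass_eq_of_sum_1 _ _ hw1]; exact hcm
      have hxcoord : ∀ j, ∑ i ∈ s, w i * zf i j = x j := by
        intro j
        have := congrFun hxeq j
        simpa using this
      set d : ι → ℝ := fun i => u0 + ∑ j, u j * zf i j with hd
      have hdpos : ∀ i ∈ s, 0 < d i := by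
        intro i hi
        have hnn : 0 ≤ ∑ j, u j * zf i j := by
          apply Finset.sum_nonneg
          intro j _
          refine mul_nonneg (hu j) ?_
          rcases hF _ (hzfF i hi) j with h | h <;> simp [h]
        simp only [hd]
        linarith
      set μ : ι → ℝ := fun i => t * w i * d i with hμ
      set P : ι → ℝ × (Fin n → ℝ) := fun i => ((d i)⁻¹, (d i)⁻¹ • zf i) with hP
      have hμ0 : ∀ i ∈ s, 0 ≤ μ i := fun i hi =>
        mul_nonneg (mul_nonneg htpos.le (hw0 i hi)) (hdpos i hi).le
      have hswap : ∑ i ∈ s, w i * ∑ j, u j * zf i j = ∑ j, u j * x j := by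
        simp_rw [Finset.mul_sum]
        rw [Finset.sum_comm]
        refine Finset.sum_congr rfl fun j _ => ?_
        rw [← hxcoord j, Finset.mul_sum]
        exact Finset.sum_congr rfl fun i _ => by ring
      have hμsum : ∑ i ∈ s, μ i = 1 := by
        have h1 : ∑ i ∈ s, μ i
            = t * u0 * ∑ i ∈ s, w i + t * ∑ i ∈ s, w i * ∑ j, u j * zf i j := by
          rw [Finset.mul_sum, Finset.mul_sum, ← Finset.sum_add_distrib]
          refine Finset.sum_congr rfl fun i _ => ?_
          simp only [hμ, hd]
          ring
        have h2 : t * ∑ j, u j * x j = ∑ j, u j * y j := by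
          rw [Finset.mul_sum]
          exact Finset.sum_congr rfl fun j _ => by rw [hyx j]; ring
        rw [h1, hw1, hswap, mul_one, h2]
        linarith
      have hPmem : ∀ i ∈ s, P i ∈ {pt : ℝ × (Fin n → ℝ) |
          u0 * pt.1 + ∑ j, u j * pt.2 j = 1 ∧ (∃ x ∈ F, pt.2 = pt.1 • x) ∧ 0 < pt.1} := by
        intro i hi
        have hdp := hdpos i hi
        have hdne : d i ≠ 0 := hdp.ne'
        refine ⟨?_, ⟨zf i, hzfF i hi, rfl⟩, inv_pos.2 hdp⟩
        simp only [hP, Pi.smul_apply, smul_eq_mul]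
        have hsm : ∑ j, u j * ((d i)⁻¹ * zf i j) = (d i)⁻¹ * ∑ j, u j * zf i j := by
          rw [Finset.mul_sum]
          exact Finset.sum_congr rfl fun j _ => by ring
        rw [hsm]
        have : u0 * (d i)⁻¹ + (d i)⁻¹ * ∑ j, u j * zf i j = (d i)⁻¹ * d i := by
          simp only [hd]; ring
        rw [this, inv_mul_cancel₀ hdne]
      have hc : s.centerMass μ P = (t, y) := by
        rw [Finset.centerMass_eq_of_sum_1 _ _ hμsum]
        have hterm : ∀ i ∈ s, μ i • P i = ((t * w i : ℝ), (t * w i) • zf i) := by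
          intro i hi
          have hdne : (d i) ≠ 0 := (hdpos i hi).ne'
          simp only [hP, hμ, Prod.smul_mk, smul_eq_mul, smul_smul]
          rw [mul_inv_cancel_right₀ hdne]
        rw [Finset.sum_congr rfl hterm]
        ext
        · simp only [Prod.fst_sum]
          rw [← Finset.mul_sum, hw1, mul_one]
        · simp only [Prod.snd_sum]
          have : ∑ i ∈ s, (t * w i) • zf i = t • ∑ i ∈ s, w i • zf i := by
            rw [Finset.smul_sum]
            exact Finset.sum_congr rfl fun i _ => by rw [smul_smul]
          rw [this, hxeq]
          simp only [hxdef, Pi.smul_apply, smul_eq_mul]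
          field_simp
      rw [← hc]
      exact Finset.centerMass_mem_convexHull s hμ0 (by rw [hμsum]; norm_num) hPmem
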